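/- (Hilbert's fourth problem, scalar flag curvature: Numata-type example.) Let Ω = {x ∈ ℝⁿ : |x| < 1}, F(x,y) = |y| + ⟨x,y⟩ and P(x,y) = |y|²/(2(|y| + ⟨x,y⟩)) on Ω × (ℝⁿ∖{0}); consider the projectively flat spray G^i = P y^i with N^j_i = ∂G^j/∂y^i. Then: (1) F > 0 on Ω × (ℝⁿ∖{0}); (2) S₀P = −2P², hence the Ricci scalar ρ := P² − S₀P = 3P² = (3/4)|y|⁴/(|y| + ⟨x,y⟩)²; (3) d_hF = 0, i.e. ∂F/∂x^i = Σ_j N^j_i ∂F/∂y^j for all i. Hence F is a projectively flat Finsler function metricizing the spray, of scalar flag curvature κ = ρ/F² = (3/4)|y|⁴/(|y| + ⟨x,y⟩)⁴. -/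

import Mathlib

open Real Finset

/-- Partial derivative with respect to the base coordinate `x^i`. -/
noncomputable def pdx {n : ℕ} (f : ((Fin n → ℝ) × (Fin n → ℝ)) → ℝ) (i : Fin n)
    (p : (Fin n → ℝ) × (Fin n → ℝ)) : ℝ :=
  fderiv ℝ f p (Pi.single i 1, 0)

/-- Partial derivative with respect to the fibre coordinate `y^i`. -/
noncomputable def pdy {n : ℕ} (f : ((Fin n → ℝ) × (Fin n → ℝ)) → ℝ) (i : Fin n)
    (p : (Fin n → ℝ) × (Fin n → ℝ)) : ℝ :=
  fderiv ℝ f p (0, Pi.single i 1)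

/-- Partial derivative of a function on the base with respect to `x^i`. -/
noncomputable def pdb {n : ℕ} (f : (Fin n → ℝ) → ℝ) (i : Fin n) (x : Fin n → ℝ) : ℝ :=
  fderiv ℝ f x (Pi.single i 1)

/-- Partial derivative with respect to the full coordinates `(x, y)` of `ℝ²ⁿ`,
indexed by `Fin n ⊕ Fin n` (`inl` = base directions, `inr` = fibre directions). -/
noncomputable def pdz {n : ℕ} (f : ((Fin n → ℝ) × (Fin n → ℝ)) → ℝ) (a : Fin n ⊕ Fin n)
    (p : (Fin n → ℝ) × (Fin n → ℝ)) : ℝ :=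
  match a with
  | Sum.inl i => pdx f i p
  | Sum.inr i => pdy f i p

/-- The spray vector field `S = yᵏ ∂/∂xᵏ - 2Gᵏ ∂/∂yᵏ` applied to a function. -/
noncomputable def sprayOp {n : ℕ} (G : Fin n → ((Fin n → ℝ) × (Fin n → ℝ)) → ℝ)
    (f : ((Fin n → ℝ) × (Fin n → ℝ)) → ℝ) (p : (Fin n → ℝ) × (Fin n → ℝ)) : ℝ :=
  ∑ k, (p.2 k * pdx f k p - 2 * G k p * pdy f k p)

/-- The flat spray `S₀ = yᵏ ∂/∂xᵏ` applied to a function. -/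
noncomputable def flatOp {n : ℕ} (f : ((Fin n → ℝ) × (Fin n → ℝ)) → ℝ)
    (p : (Fin n → ℝ) × (Fin n → ℝ)) : ℝ :=
  ∑ k, p.2 k * pdx f k p

/-- The coefficients `N^i_j = ∂G^i/∂y^j` of the nonlinear connection. -/
noncomputable def Ncon {n : ℕ} (G : Fin n → ((Fin n → ℝ) × (Fin n → ℝ)) → ℝ)
    (i j : Fin n) : ((Fin n → ℝ) × (Fin n → ℝ)) → ℝ :=
  fun p => pdy (G i) j p

/-- The components `R^i_j = 2 ∂G^i/∂x^j - S(N^i_j) - N^i_k N^k_j` of the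
Jacobi endomorphism. -/
noncomputable def jacobiR {n : ℕ} (G : Fin n → ((Fin n → ℝ) × (Fin n → ℝ)) → ℝ)
    (i j : Fin n) (p : (Fin n → ℝ) × (Fin n → ℝ)) : ℝ :=
  2 * pdx (G i) j p - sprayOp G (Ncon G i j) p - ∑ k, Ncon G i k p * Ncon G k j p

/-- The domain `Ω × (ℝⁿ ∖ {0})`. -/
def sprayDom {n : ℕ} (Ω : Set (Fin n → ℝ)) : Set ((Fin n → ℝ) × (Fin n → ℝ)) :=
  Ω ×ˢ {y | y ≠ 0}

/-- Squared Euclidean norm `|v|²` on `ℝⁿ`. -/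
def nsq {n : ℕ} (v : Fin n → ℝ) : ℝ := ∑ i, v i ^ 2

/-- Euclidean inner product `⟨v, w⟩` on `ℝⁿ`. -/
def dotp {n : ℕ} (v w : Fin n → ℝ) : ℝ := ∑ i, v i * w i


noncomputable def CX (n : ℕ) (i : Fin n) : ((Fin n → ℝ) × (Fin n → ℝ)) →L[ℝ] ℝ :=
  (ContinuousLinearMap.proj i).comp (ContinuousLinearMap.fst ℝ (Fin n → ℝ) (Fin n → ℝ))

noncomputable def CY (n : ℕ) (i : Fin n) : ((Fin n → ℝ) × (Fin n → ℝ)) →L[ℝ] ℝ :=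
  (ContinuousLinearMap.proj i).comp (ContinuousLinearMap.snd ℝ (Fin n → ℝ) (Fin n → ℝ))

@[simp] lemma CX_apply {n : ℕ} (i : Fin n) (v : (Fin n → ℝ) × (Fin n → ℝ)) :
    CX n i v = v.1 i := rfl

@[simp] lemma CY_apply {n : ℕ} (i : Fin n) (v : (Fin n → ℝ) × (Fin n → ℝ)) :
    CY n i v = v.2 i := rfl

noncomputable def LQ (n : ℕ) (p : (Fin n → ℝ) × (Fin n → ℝ)) :
    ((Fin n → ℝ) × (Fin n → ℝ)) →L[ℝ] ℝ := ∑ i, (2 * p.2 i) • CY n i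

noncomputable def LD (n : ℕ) (p : (Fin n → ℝ) × (Fin n → ℝ)) :
    ((Fin n → ℝ) × (Fin n → ℝ)) →L[ℝ] ℝ := ∑ i, (p.1 i • CY n i + p.2 i • CX n i)

noncomputable def LF (n : ℕ) (p : (Fin n → ℝ) × (Fin n → ℝ)) :
    ((Fin n → ℝ) × (Fin n → ℝ)) →L[ℝ] ℝ :=
  (1 / (2 * Real.sqrt (nsq p.2))) • LQ n p + LD n p

noncomputable def LP (n : ℕ) (p : (Fin n → ℝ) × (Fin n → ℝ)) :
    ((Fin n → ℝ) × (Fin n → ℝ)) →L[ℝ] ℝ :=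
  nsq p.2 • ((-((2 * (Real.sqrt (nsq p.2) + dotp p.1 p.2)) ^ 2)⁻¹) • ((2:ℝ) • LF n p))
    + (2 * (Real.sqrt (nsq p.2) + dotp p.1 p.2))⁻¹ • LQ n p

lemma hasF_Q {n : ℕ} (p : (Fin n → ℝ) × (Fin n → ℝ)) :
    HasFDerivAt (fun q : (Fin n → ℝ) × (Fin n → ℝ) => nsq q.2) (LQ n p) p := by
  have h : ∀ i ∈ Finset.univ, HasFDerivAt (fun q : (Fin n → ℝ) × (Fin n → ℝ) => q.2 i * q.2 i)
      ((2 * p.2 i) • CY n i) p := by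
    intro i _
    have h1 : HasFDerivAt (fun q : (Fin n → ℝ) × (Fin n → ℝ) => q.2 i) (CY n i) p :=
      (CY n i).hasFDerivAt
    have heq : (2 * p.2 i) • CY n i = p.2 i • CY n i + p.2 i • CY n i := by
      rw [two_mul, add_smul]
    rw [heq]
    exact h1.mul h1
  have := HasFDerivAt.fun_sum h
  have he : (fun q : (Fin n → ℝ) × (Fin n → ℝ) => nsq q.2)
      = fun q => ∑ i, q.2 i * q.2 i := by
    funext q; simp [nsq, pow_two]
  rw [he]
  exact this

lemma hasF_D {n : ℕ} (p : (Fin n → ℝ) × (Fin n → ℝ)) :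
    HasFDerivAt (fun q : (Fin n → ℝ) × (Fin n → ℝ) => dotp q.1 q.2) (LD n p) p := by
  have h : ∀ i ∈ Finset.univ, HasFDerivAt (fun q : (Fin n → ℝ) × (Fin n → ℝ) => q.1 i * q.2 i)
      (p.1 i • CY n i + p.2 i • CX n i) p := by
    intro i _
    exact ((CX n i).hasFDerivAt (x := p)).mul ((CY n i).hasFDerivAt (x := p))
  have := HasFDerivAt.fun_sum h
  have he : (fun q : (Fin n → ℝ) × (Fin n → ℝ) => dotp q.1 q.2)
      = fun q => ∑ i, q.1 i * q.2 i := by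
    funext q; simp [dotp]
  rw [he]
  exact this

lemma hasF_F {n : ℕ} (p : (Fin n → ℝ) × (Fin n → ℝ)) (h : nsq p.2 ≠ 0) :
    HasFDerivAt (fun q : (Fin n → ℝ) × (Fin n → ℝ) => Real.sqrt (nsq q.2) + dotp q.1 q.2)
      (LF n p) p := by
  have hs : HasFDerivAt (fun q : (Fin n → ℝ) × (Fin n → ℝ) => Real.sqrt (nsq q.2))
      ((1 / (2 * Real.sqrt (nsq p.2))) • LQ n p) p :=
    (Real.hasDerivAt_sqrt h).comp_hasFDerivAt p (hasF_Q p)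
  exact hs.add (hasF_D p)

lemma hasF_P {n : ℕ} (p : (Fin n → ℝ) × (Fin n → ℝ)) (h : nsq p.2 ≠ 0)
    (hf : Real.sqrt (nsq p.2) + dotp p.1 p.2 ≠ 0) :
    HasFDerivAt
      (fun q : (Fin n → ℝ) × (Fin n → ℝ) =>
        nsq q.2 / (2 * (Real.sqrt (nsq q.2) + dotp q.1 q.2))) (LP n p) p := by
  have h2 : (2 : ℝ) * (Real.sqrt (nsq p.2) + dotp p.1 p.2) ≠ 0 := by
    simpa using hf
  have hinv : HasFDerivAt
      (fun q : (Fin n → ℝ) × (Fin n → ℝ) =>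
        (2 * (Real.sqrt (nsq q.2) + dotp q.1 q.2))⁻¹)
      ((-((2 * (Real.sqrt (nsq p.2) + dotp p.1 p.2)) ^ 2)⁻¹) • ((2:ℝ) • LF n p)) p :=
    (hasDerivAt_inv h2).comp_hasFDerivAt p ((hasF_F p h).const_mul 2)
  have := (hasF_Q p).mul hinv
  simpa only [div_eq_mul_inv, LP, Pi.mul_def] using this

lemma hasF_G {n : ℕ} (p : (Fin n → ℝ) × (Fin n → ℝ)) (h : nsq p.2 ≠ 0)
    (hf : Real.sqrt (nsq p.2) + dotp p.1 p.2 ≠ 0) (j : Fin n) :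
    HasFDerivAt
      (fun q : (Fin n → ℝ) × (Fin n → ℝ) =>
        nsq q.2 / (2 * (Real.sqrt (nsq q.2) + dotp q.1 q.2)) * q.2 j)
      ((nsq p.2 / (2 * (Real.sqrt (nsq p.2) + dotp p.1 p.2))) • CY n j + p.2 j • LP n p) p :=
  (hasF_P p h hf).mul ((CY n j).hasFDerivAt (x := p))


/-- Hilbert's fourth problem, scalar flag curvature: the
Numata-type example. For `F(x,y) = |y| + ⟨x,y⟩` on the unit ball,
`P = |y|²/(2(|y|+⟨x,y⟩))` and `G^i = P y^i`: `F > 0`, `S₀P = -2P²` (so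
`ρ = P² - S₀P = 3P² = (3/4)|y|⁴/(|y|+⟨x,y⟩)²`), and `d_hF = 0`; hence `F` is a
projectively flat Finsler function metricizing the spray, of scalar flag
curvature `κ = ρ/F² = (3/4)|y|⁴/(|y|+⟨x,y⟩)⁴`. -/
theorem hilbert_fourth_numata
    (n : ℕ)
    (F P : ((Fin n → ℝ) × (Fin n → ℝ)) → ℝ)
    (hF : ∀ p, F p = Real.sqrt (nsq p.2) + dotp p.1 p.2)
    (hP : ∀ p, P p = nsq p.2 / (2 * (Real.sqrt (nsq p.2) + dotp p.1 p.2)))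
    (G : Fin n → ((Fin n → ℝ) × (Fin n → ℝ)) → ℝ)
    (hGdef : ∀ i p, G i p = P p * p.2 i) :
    ∀ p ∈ sprayDom {x : Fin n → ℝ | nsq x < 1},
      0 < F p ∧
      flatOp P p = -2 * P p ^ 2 ∧
      P p ^ 2 - flatOp P p = 3 * P p ^ 2 ∧
      3 * P p ^ 2 = (3 / 4) * nsq p.2 ^ 2 / (Real.sqrt (nsq p.2) + dotp p.1 p.2) ^ 2 ∧
      (∀ i, pdx F i p = ∑ j, Ncon G j i p * pdy F j p) := by
  intro p hp
  rw [sprayDom, Set.mem_prod] at hp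
  obtain ⟨hx, hy⟩ := hp
  have hx1 : nsq p.1 < 1 := hx
  have hy0 : p.2 ≠ 0 := hy
  -- basic positivity
  have hQpos : 0 < nsq p.2 := by
    obtain ⟨i, hi⟩ := Function.ne_iff.mp hy0
    have h1 : (0 : ℝ) < p.2 i ^ 2 := pow_two_pos_of_ne_zero hi
    have h2 : p.2 i ^ 2 ≤ nsq p.2 := by
      rw [nsq]
      exact Finset.single_le_sum (f := fun j => p.2 j ^ 2) (fun j _ => sq_nonneg _) (Finset.mem_univ i)
    linarith
  have hs : 0 < Real.sqrt (nsq p.2) := Real.sqrt_pos.mpr hQpos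
  have hs2 : Real.sqrt (nsq p.2) ^ 2 = nsq p.2 := Real.sq_sqrt hQpos.le
  have hxnn : 0 ≤ nsq p.1 := Finset.sum_nonneg fun j _ => sq_nonneg _
  have hCS : (dotp p.1 p.2) ^ 2 ≤ nsq p.1 * nsq p.2 :=
    Finset.sum_mul_sq_le_sq_mul_sq Finset.univ _ _
  have hd2 : (dotp p.1 p.2) ^ 2 < nsq p.2 := by nlinarith
  have hFpos : 0 < Real.sqrt (nsq p.2) + dotp p.1 p.2 := by nlinarith
  have hFne : Real.sqrt (nsq p.2) + dotp p.1 p.2 ≠ 0 := hFpos.ne'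
  -- substitute the explicit formulas
  have hFfun : F = fun q => Real.sqrt (nsq q.2) + dotp q.1 q.2 := funext hF
  have hPfun : P = fun q => nsq q.2 / (2 * (Real.sqrt (nsq q.2) + dotp q.1 q.2)) := funext hP
  have hGfun : G = fun i q => P q * q.2 i := funext fun i => funext fun q => hGdef i q
  subst hGfun
  subst hPfun
  subst hFfun
  -- derivative values
  have hFx : ∀ i, pdx (fun q : (Fin n → ℝ) × (Fin n → ℝ) =>
      Real.sqrt (nsq q.2) + dotp q.1 q.2) i p = p.2 i := by
    intro i
    rw [pdx, (hasF_F p hQpos.ne').fderiv]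
    simp [LF, LQ, LD, Pi.single_apply, mul_ite, Finset.sum_ite_eq']
  have hFy : ∀ j, pdy (fun q : (Fin n → ℝ) × (Fin n → ℝ) =>
      Real.sqrt (nsq q.2) + dotp q.1 q.2) j p
      = p.2 j / Real.sqrt (nsq p.2) + p.1 j := by
    intro j
    rw [pdy, (hasF_F p hQpos.ne').fderiv]
    simp [LF, LQ, LD, Pi.single_apply, mul_ite, Finset.sum_ite_eq']
    field_simp
  have hPx : ∀ k, pdx (fun q : (Fin n → ℝ) × (Fin n → ℝ) =>
      nsq q.2 / (2 * (Real.sqrt (nsq q.2) + dotp q.1 q.2))) k p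
      = -(nsq p.2 * p.2 k) / (2 * (Real.sqrt (nsq p.2) + dotp p.1 p.2) ^ 2) := by
    intro k
    rw [pdx, (hasF_P p hQpos.ne' hFne).fderiv]
    simp [LP, LF, LQ, LD, Pi.single_apply, mul_ite, Finset.sum_ite_eq']
    field_simp
  have hPy : ∀ i, pdy (fun q : (Fin n → ℝ) × (Fin n → ℝ) =>
      nsq q.2 / (2 * (Real.sqrt (nsq q.2) + dotp q.1 q.2))) i p
      = p.2 i / (Real.sqrt (nsq p.2) + dotp p.1 p.2)
        - nsq p.2 * (p.2 i / Real.sqrt (nsq p.2) + p.1 i)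
          / (2 * (Real.sqrt (nsq p.2) + dotp p.1 p.2) ^ 2) := by
    intro i
    rw [pdy, (hasF_P p hQpos.ne' hFne).fderiv]
    simp [LP, LF, LQ, LD, Pi.single_apply, mul_ite, Finset.sum_ite_eq']
    field_simp
    ring
  have hN : ∀ j i, Ncon (fun i q => nsq q.2 / (2 * (Real.sqrt (nsq q.2) + dotp q.1 q.2)) * q.2 i)
      j i p = nsq p.2 / (2 * (Real.sqrt (nsq p.2) + dotp p.1 p.2)) * (Pi.single i 1 : Fin n → ℝ) j
      + p.2 j * pdy (fun q : (Fin n → ℝ) × (Fin n → ℝ) =>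
          nsq q.2 / (2 * (Real.sqrt (nsq q.2) + dotp q.1 q.2))) i p := by
    intro j i
    rw [Ncon, pdy, (hasF_G p hQpos.ne' hFne j).fderiv, pdy, (hasF_P p hQpos.ne' hFne).fderiv]
    simp
  refine ⟨hFpos, ?_, ?_, ?_, ?_⟩
  · -- flatOp P = -2 P^2
    rw [flatOp]
    have h1 : ∀ k ∈ Finset.univ, p.2 k * pdx (fun q : (Fin n → ℝ) × (Fin n → ℝ) =>
        nsq q.2 / (2 * (Real.sqrt (nsq q.2) + dotp q.1 q.2))) k p
        = (-(nsq p.2) / (2 * (Real.sqrt (nsq p.2) + dotp p.1 p.2) ^ 2)) * p.2 k ^ 2 := by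
      intro k _
      rw [hPx k]; ring
    rw [Finset.sum_congr rfl h1, ← Finset.mul_sum]
    show _ * nsq p.2 = _
    field_simp
  · -- rho = 3 P^2
    rw [flatOp]
    have h1 : ∀ k ∈ Finset.univ, p.2 k * pdx (fun q : (Fin n → ℝ) × (Fin n → ℝ) =>
        nsq q.2 / (2 * (Real.sqrt (nsq q.2) + dotp q.1 q.2))) k p
        = (-(nsq p.2) / (2 * (Real.sqrt (nsq p.2) + dotp p.1 p.2) ^ 2)) * p.2 k ^ 2 := by
      intro k _
      rw [hPx k]; ring
    rw [Finset.sum_congr rfl h1, ← Finset.mul_sum]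
    show _ - _ * nsq p.2 = _
    field_simp
    ring
  · -- 3 P^2 = 3/4 |y|^4 / F^2
    show (3:ℝ) * (nsq p.2 / (2 * (Real.sqrt (nsq p.2) + dotp p.1 p.2))) ^ 2 = _
    field_simp
    ring
  · -- d_h F = 0
    intro i
    rw [hFx i]
    have h2 : ∀ j ∈ Finset.univ,
        Ncon (fun i q => nsq q.2 / (2 * (Real.sqrt (nsq q.2) + dotp q.1 q.2)) * q.2 i) j i p
          * pdy (fun q : (Fin n → ℝ) × (Fin n → ℝ) =>
              Real.sqrt (nsq q.2) + dotp q.1 q.2) j p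
        = (nsq p.2 / (2 * (Real.sqrt (nsq p.2) + dotp p.1 p.2))
            * (Pi.single i 1 : Fin n → ℝ) j
            + p.2 j * (p.2 i / (Real.sqrt (nsq p.2) + dotp p.1 p.2)
              - nsq p.2 * (p.2 i / Real.sqrt (nsq p.2) + p.1 i)
                / (2 * (Real.sqrt (nsq p.2) + dotp p.1 p.2) ^ 2)))
          * (p.2 j / Real.sqrt (nsq p.2) + p.1 j) := by
      intro j _
      rw [hN j i, hFy j, hPy i]
    rw [Finset.sum_congr rfl h2]
    set A : ℝ := p.2 i / (Real.sqrt (nsq p.2) + dotp p.1 p.2)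
      - nsq p.2 * (p.2 i / Real.sqrt (nsq p.2) + p.1 i)
        / (2 * (Real.sqrt (nsq p.2) + dotp p.1 p.2) ^ 2) with hA
    have hsplit : ∑ j, (nsq p.2 / (2 * (Real.sqrt (nsq p.2) + dotp p.1 p.2))
          * (Pi.single i 1 : Fin n → ℝ) j + p.2 j * A)
        * (p.2 j / Real.sqrt (nsq p.2) + p.1 j)
        = nsq p.2 / (2 * (Real.sqrt (nsq p.2) + dotp p.1 p.2))
            * (p.2 i / Real.sqrt (nsq p.2) + p.1 i)
          + A * (nsq p.2 / Real.sqrt (nsq p.2) + dotp p.1 p.2) := by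
      have e1 : ∀ j ∈ Finset.univ, (nsq p.2 / (2 * (Real.sqrt (nsq p.2) + dotp p.1 p.2))
            * (Pi.single i 1 : Fin n → ℝ) j + p.2 j * A)
          * (p.2 j / Real.sqrt (nsq p.2) + p.1 j)
          = nsq p.2 / (2 * (Real.sqrt (nsq p.2) + dotp p.1 p.2))
              * (Pi.single i 1 : Fin n → ℝ) j * (p.2 j / Real.sqrt (nsq p.2) + p.1 j)
            + A * (p.2 j ^ 2 / Real.sqrt (nsq p.2) + p.1 j * p.2 j) := by
        intro j _; ring
      rw [Finset.sum_congr rfl e1, Finset.sum_add_distrib]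
      congr 1
      · simp [Pi.single_apply, mul_ite, ite_mul, Finset.sum_ite_eq']
      · rw [nsq, dotp, Finset.sum_div, ← Finset.sum_add_distrib, Finset.mul_sum]
    rw [hsplit, hA]
    have hsne : Real.sqrt (nsq p.2) ≠ 0 := hs.ne'
    generalize Real.sqrt (nsq p.2) = s at hs2 hsne hFne ⊢
    rw [← hs2]
    field_simp
    ring
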